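/- For every integer k with 1 ≤ k ≤ 6 and every κ > 0 there exists θ₀ ∈ (π/2, π) such that for every θ ∈ (π/2, θ₀] there is a constant c > 0 with: for all τ > 0 satisfying κ·τ·sin θ ≤ π and all z ∈ Γ^τ_{θ,κ}, one has |μ₂(e^{−zτ}) − 1| ≤ c·τ^k·|z|^k. -/

import Mathlib

open Real

/-- Generating polynomial of the k-step BDF method: δ(ξ) = ∑_{j=1}^{k} (1/j)(1−ξ)^j. -/
noncomputable def bdfDelta (k : ℕ) (ξ : ℂ) : ℂ :=
  ∑ j ∈ Finset.Icc 1 k, (1 / (j : ℂ)) * (1 - ξ) ^ j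

/-- Truncated sectorial contour Γ^τ_{θ,κ}. -/
noncomputable def contourTrunc (θ κ τ : ℝ) : Set ℂ :=
  {z : ℂ | ‖z‖ = κ ∧ |z.arg| ≤ θ} ∪
    {z : ℂ | ∃ r : ℝ, κ ≤ r ∧ r ≤ π / (τ * Real.sin θ) ∧
      (z = (r : ℂ) * Complex.exp (θ * Complex.I) ∨
        z = (r : ℂ) * Complex.exp (-θ * Complex.I))}

/-- Starting-correction coefficients b_j^{(k)} of the BDF-k scheme. -/
noncomputable def bCoef : ℕ → ℕ → ℂ
  | 2, 1 => 1 / 2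
  | 3, 1 => 11 / 12
  | 3, 2 => -(5 / 12)
  | 4, 1 => 31 / 24
  | 4, 2 => -(7 / 6)
  | 4, 3 => 3 / 8
  | 5, 1 => 1181 / 720
  | 5, 2 => -(177 / 80)
  | 5, 3 => 341 / 240
  | 5, 4 => -(251 / 720)
  | 6, 1 => 2837 / 1440
  | 6, 2 => -(2543 / 720)
  | 6, 3 => 17 / 5
  | 6, 4 => -(1201 / 720)
  | 6, 5 => 95 / 288
  | _, _ => 0

/-- μ₂(ξ) = δ(ξ)·(ξ/(1−ξ) + ∑_{j=1}^{k−1} b_j^{(k)} ξ^j). -/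
noncomputable def mu2 (k : ℕ) (ξ : ℂ) : ℂ :=
  bdfDelta k ξ * (ξ / (1 - ξ) + ∑ j ∈ Finset.Icc 1 (k - 1), bCoef k j * ξ ^ j)

noncomputable def qPoly : ℕ → ℂ → ℂ
  | 1, _ => -1
  | 2, ξ => -1 + (1/4)*ξ
  | 3, ξ => -1 + (37/72)*ξ - (5/36)*ξ^2
  | 4, ξ => -1 + (223/288)*ξ - (5/12)*ξ^2 + (3/32)*ξ^3
  | 5, ξ => -1 + (44437/43200)*ξ - (8929/10800)*ξ^2 + (5347/14400)*ξ^3 - (251/3600)*ξ^4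
  | 6, ξ => -1 + (36773/28800)*ξ - (4907/3600)*ξ^2 + (8801/9600)*ξ^3 - (743/2160)*ξ^4 + (95/1728)*ξ^5
  | _, _ => 0

set_option maxHeartbeats 2000000 in
lemma mu2_factor1 (ξ : ℂ) (h1 : (1:ℂ) - ξ ≠ 0) :
    mu2 1 ξ - 1 = (1 - ξ) ^ 1 * qPoly 1 ξ := by
  rw [mu2,
    bdfDelta,
    qPoly,
    show Finset.Icc 1 (1-1) = (∅ : Finset ℕ) from rfl,
    show Finset.Icc 1 1 = ({1} : Finset ℕ) from rfl,
    Finset.sum_singleton,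
    Finset.sum_empty]
  field_simp
  push_cast; ring

set_option maxHeartbeats 2000000 in
lemma mu2_factor2 (ξ : ℂ) (h1 : (1:ℂ) - ξ ≠ 0) :
    mu2 2 ξ - 1 = (1 - ξ) ^ 2 * qPoly 2 ξ := by
  rw [mu2,
    bdfDelta,
    qPoly,
    show Finset.Icc 1 (2-1) = ({1} : Finset ℕ) from rfl,
    show Finset.Icc 1 2 = ({1,2} : Finset ℕ) from rfl,
    Finset.sum_insert (by decide),
    Finset.sum_singleton,
    Finset.sum_singleton,
    show bCoef 2 1 = 1/2 from rfl]
  field_simp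
  ring

set_option maxHeartbeats 2000000 in
lemma mu2_factor3 (ξ : ℂ) (h1 : (1:ℂ) - ξ ≠ 0) :
    mu2 3 ξ - 1 = (1 - ξ) ^ 3 * qPoly 3 ξ := by
  rw [mu2,
    bdfDelta,
    qPoly,
    show Finset.Icc 1 (3-1) = ({1,2} : Finset ℕ) from rfl,
    show Finset.Icc 1 3 = ({1,2,3} : Finset ℕ) from rfl,
    Finset.sum_insert (by decide),
    Finset.sum_insert (by decide),
    Finset.sum_insert (by decide),
    Finset.sum_singleton,
    Finset.sum_singleton,
    show bCoef 3 1 = 11/12 from rfl,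
    show bCoef 3 2 = -(5/12) from rfl]
  field_simp
  ring

set_option maxHeartbeats 2000000 in
lemma mu2_factor4 (ξ : ℂ) (h1 : (1:ℂ) - ξ ≠ 0) :
    mu2 4 ξ - 1 = (1 - ξ) ^ 4 * qPoly 4 ξ := by
  rw [mu2,
    bdfDelta,
    qPoly,
    show Finset.Icc 1 (4-1) = ({1,2,3} : Finset ℕ) from rfl,
    show Finset.Icc 1 4 = ({1,2,3,4} : Finset ℕ) from rfl,
    Finset.sum_insert (by decide),
    Finset.sum_insert (by decide),
    Finset.sum_insert (by decide),
    Finset.sum_insert (by decide),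
    Finset.sum_insert (by decide),
    Finset.sum_singleton,
    Finset.sum_singleton,
    show bCoef 4 1 = 31/24 from rfl,
    show bCoef 4 2 = -(7/6) from rfl,
    show bCoef 4 3 = 3/8 from rfl]
  field_simp
  ring

set_option maxHeartbeats 2000000 in
lemma mu2_factor5 (ξ : ℂ) (h1 : (1:ℂ) - ξ ≠ 0) :
    mu2 5 ξ - 1 = (1 - ξ) ^ 5 * qPoly 5 ξ := by
  rw [mu2,
    bdfDelta,
    qPoly,
    show Finset.Icc 1 (5-1) = ({1,2,3,4} : Finset ℕ) from rfl,
    show Finset.Icc 1 5 = ({1,2,3,4,5} : Finset ℕ) from rfl,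
    Finset.sum_insert (by decide),
    Finset.sum_insert (by decide),
    Finset.sum_insert (by decide),
    Finset.sum_insert (by decide),
    Finset.sum_insert (by decide),
    Finset.sum_insert (by decide),
    Finset.sum_insert (by decide),
    Finset.sum_singleton,
    Finset.sum_singleton,
    show bCoef 5 1 = 1181/720 from rfl,
    show bCoef 5 2 = -(177/80) from rfl,
    show bCoef 5 3 = 341/240 from rfl,
    show bCoef 5 4 = -(251/720) from rfl]
  field_simp
  ring

set_option maxHeartbeats 2000000 in
lemma mu2_factor6 (ξ : ℂ) (h1 : (1:ℂ) - ξ ≠ 0) :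
    mu2 6 ξ - 1 = (1 - ξ) ^ 6 * qPoly 6 ξ := by
  rw [mu2,
    bdfDelta,
    qPoly,
    show Finset.Icc 1 (6-1) = ({1,2,3,4,5} : Finset ℕ) from rfl,
    show Finset.Icc 1 6 = ({1,2,3,4,5,6} : Finset ℕ) from rfl,
    Finset.sum_insert (by decide),
    Finset.sum_insert (by decide),
    Finset.sum_insert (by decide),
    Finset.sum_insert (by decide),
    Finset.sum_insert (by decide),
    Finset.sum_insert (by decide),
    Finset.sum_insert (by decide),
    Finset.sum_insert (by decide),
    Finset.sum_insert (by decide),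
    Finset.sum_singleton,
    Finset.sum_singleton,
    show bCoef 6 1 = 2837/1440 from rfl,
    show bCoef 6 2 = -(2543/720) from rfl,
    show bCoef 6 3 = 17/5 from rfl,
    show bCoef 6 4 = -(1201/720) from rfl,
    show bCoef 6 5 = 95/288 from rfl]
  field_simp
  ring

lemma mu2_factor (k : ℕ) (hk1 : 1 ≤ k) (hk6 : k ≤ 6) (ξ : ℂ) (h : ξ ≠ 1) :
    mu2 k ξ - 1 = (1 - ξ) ^ k * qPoly k ξ := by
  have h1 : (1 : ℂ) - ξ ≠ 0 := sub_ne_zero.2 (Ne.symm h)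
  interval_cases k
  · exact mu2_factor1 ξ h1
  · exact mu2_factor2 ξ h1
  · exact mu2_factor3 ξ h1
  · exact mu2_factor4 ξ h1
  · exact mu2_factor5 ξ h1
  · exact mu2_factor6 ξ h1

lemma qPoly_continuous (k : ℕ) (hk1 : 1 ≤ k) (hk6 : k ≤ 6) : Continuous (qPoly k) := by
  interval_cases k <;>
  · show Continuous fun ξ : ℂ => qPoly _ ξ
    simp only [qPoly]
    fun_prop

lemma exp_neg_hasDerivAt (u : ℂ) :
    HasDerivAt (fun v : ℂ => Complex.exp (-v)) (-Complex.exp (-u)) u := by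
  have h := (Complex.hasDerivAt_exp (-u)).comp u (hasDerivAt_neg u)
  rw [show -Complex.exp (-u) = Complex.exp (-u) * -1 by ring]
  exact h

lemma exp_neg_sub_one_bound {R : ℝ} (hR : 0 ≤ R) {w : ℂ} (hw : ‖w‖ ≤ R) :
    ‖Complex.exp (-w) - 1‖ ≤ Real.exp R * ‖w‖ := by
  have hball : w ∈ Metric.closedBall (0 : ℂ) R := by
    simpa [Metric.mem_closedBall, Complex.dist_eq] using hw
  have h0 : (0 : ℂ) ∈ Metric.closedBall (0 : ℂ) R := Metric.mem_closedBall_self hR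
  have hmvt := (convex_closedBall (0 : ℂ) R).norm_image_sub_le_of_norm_deriv_le
    (f := fun v : ℂ => Complex.exp (-v)) (C := Real.exp R)
    (fun u _ => (exp_neg_hasDerivAt u).differentiableAt)
    (fun u hu => by
      rw [(exp_neg_hasDerivAt u).deriv]
      have hu' : ‖u‖ ≤ R := by
        simpa [Metric.mem_closedBall, Complex.dist_eq] using hu
      have h1 : ‖-Complex.exp (-u)‖ = Real.exp (-u).re := by
        rw [norm_neg, Complex.norm_exp]
      rw [h1]
      apply Real.exp_le_exp.2
      calc (-u).re ≤ |(-u).re| := le_abs_self _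
        _ ≤ ‖-u‖ := Complex.abs_re_le_norm _
        _ = ‖u‖ := norm_neg u
        _ ≤ R := hu')
    h0 hball
  simpa [Complex.dist_eq] using hmvt

/-- For 1 ≤ k ≤ 6 and κ > 0: |μ₂(e^{−zτ}) − 1| ≤ c·τ^k·|z|^k on Γ^τ_{θ,κ}. -/
theorem mu2_error (k : ℕ) (hk1 : 1 ≤ k) (hk6 : k ≤ 6) (κ : ℝ) (hκ : 0 < κ) :
    ∃ θ₀ ∈ Set.Ioo (π / 2) π, ∀ θ ∈ Set.Ioc (π / 2) θ₀,
      ∃ c > (0 : ℝ), ∀ τ : ℝ, 0 < τ → κ * τ * Real.sin θ ≤ π →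
        ∀ z ∈ contourTrunc θ κ τ,
          ‖mu2 k (Complex.exp (-z * (τ : ℂ))) - 1‖
            ≤ c * τ ^ k * ‖z‖ ^ k := by
  have hπ := Real.pi_pos
  refine ⟨3 * π / 4, ⟨by linarith, by linarith⟩, ?_⟩
  rintro θ ⟨hθ1, hθ2⟩
  have hs2 : (0:ℝ) < Real.sqrt 2 := by positivity
  have hs2sq : Real.sqrt 2 ^ 2 = 2 := Real.sq_sqrt (by norm_num)
  have hsin : Real.sqrt 2 / 2 ≤ Real.sin θ := by
    have h1 : Real.sin θ = Real.cos (θ - π / 2) := by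
      rw [show θ - π / 2 = -(π / 2 - θ) by ring, Real.cos_neg, Real.cos_pi_div_two_sub]
    rw [h1, ← Real.cos_pi_div_four]
    exact Real.cos_le_cos_of_nonneg_of_le_pi (by linarith) (by linarith) (by linarith)
  have hsinpos : 0 < Real.sin θ := lt_of_lt_of_le (by positivity) hsin
  set R : ℝ := Real.sqrt 2 * π with hRdef
  have hRpos : 0 < R := by positivity
  have hR2π : R < 2 * π := by nlinarith
  have hπsin : π / Real.sin θ ≤ R := by
    rw [div_le_iff₀ hsinpos]
    nlinarith
  -- bound on the polynomial part
  have hqc : Continuous (qPoly k) := qPoly_continuous k hk1 hk6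
  have hF : ContinuousOn (fun w : ℂ => qPoly k (Complex.exp (-w))) (Metric.closedBall 0 R) :=
    (hqc.comp (Complex.continuous_exp.comp continuous_neg)).continuousOn
  obtain ⟨M, hM⟩ := (isCompact_closedBall (0:ℂ) R).exists_bound_of_continuousOn hF
  refine ⟨(max M 0 + 1) * Real.exp R ^ k, by positivity, ?_⟩
  intro τ hτ hκτπ z hz
  -- |z| ≥ κ and |z| * τ ≤ π / sin θ
  have hkey : κ ≤ ‖z‖ ∧ ‖z‖ * τ ≤ π / Real.sin θ := by
    rcases hz with ⟨hzabs, -⟩ | ⟨r, hr1, hr2, hc⟩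
    · refine ⟨le_of_eq hzabs.symm, ?_⟩
      rw [hzabs, le_div_iff₀ hsinpos]
      linarith [hκτπ]
    · have habsz : ‖z‖ = r := by
        have hrpos : 0 < r := lt_of_lt_of_le hκ hr1
        rcases hc with rfl | rfl <;>
          simp [map_mul, Complex.norm_exp, abs_of_pos hrpos]
      refine ⟨habsz ▸ hr1, ?_⟩
      rw [habsz, le_div_iff₀ hsinpos]
      have h2 : r * (τ * Real.sin θ) ≤ π := by
        rw [← le_div_iff₀ (by positivity)] ; exact hr2
      linarith [h2]
  obtain ⟨hzκ, hzτ⟩ := hkey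
  set w : ℂ := z * (τ : ℂ) with hwdef
  have hw_abs : ‖w‖ = ‖z‖ * τ := by
    rw [hwdef, norm_mul, Complex.norm_real, Real.norm_eq_abs, abs_of_pos hτ]
  have hwR : ‖w‖ ≤ R := by rw [hw_abs]; linarith
  have hwpos : 0 < ‖w‖ := by
    rw [hw_abs]; exact mul_pos (lt_of_lt_of_le hκ hzκ) hτ
  have hξ1 : Complex.exp (-w) ≠ 1 := by
    intro hE
    rw [Complex.exp_eq_one_iff] at hE
    obtain ⟨n, hn⟩ := hE
    have habs : ‖w‖ = |(n : ℝ)| * (2 * π) := by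
      have := congrArg (‖·‖) hn
      rw [norm_neg] at this
      rw [this]
      simp [Complex.norm_intCast, abs_of_pos hπ, mul_assoc]
    rcases eq_or_ne n 0 with rfl | hn0
    · rw [habs] at hwpos; simp at hwpos
    · have h1 : (1:ℝ) ≤ |(n:ℝ)| := by exact_mod_cast Int.one_le_abs hn0
      have : 2 * π ≤ ‖w‖ := by
        rw [habs]; nlinarith
      linarith [lt_of_le_of_lt hwR hR2π]
  have hrw : -z * (τ : ℂ) = -w := by rw [hwdef]; ring
  rw [hrw, mu2_factor k hk1 hk6 _ hξ1, norm_mul, norm_pow]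
  have hq : ‖qPoly k (Complex.exp (-w))‖ ≤ max M 0 := by
    have := hM w (by simpa [Metric.mem_closedBall, Complex.dist_eq] using hwR)
    exact le_trans this (le_max_left _ _)
  have h1ξ : ‖1 - Complex.exp (-w)‖ ≤ Real.exp R * ‖w‖ := by
    rw [show (1 : ℂ) - Complex.exp (-w) = -(Complex.exp (-w) - 1) by ring, norm_neg]
    exact exp_neg_sub_one_bound hRpos.le hwR
  calc ‖1 - Complex.exp (-w)‖ ^ k * ‖qPoly k (Complex.exp (-w))‖
      ≤ (Real.exp R * ‖w‖) ^ k * max M 0 := by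
        gcongr
    _ ≤ (Real.exp R * ‖w‖) ^ k * (max M 0 + 1) := by
        gcongr; linarith
    _ = (max M 0 + 1) * Real.exp R ^ k * ‖w‖ ^ k := by ring
    _ = (max M 0 + 1) * Real.exp R ^ k * τ ^ k * ‖z‖ ^ k := by
        rw [hw_abs]; ring
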